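/- If t = p/q ∈ (0,1) with p, q coprime positive integers, p < q, and p ∈ Γ or q ∈ Γ, then C_t contains a nondegenerate closed interval, i.e., there exist real numbers a < b with [a,b] ⊆ C_t. -/

import Mathlib

open Filter Topology

/-- The digit set `Ω_t = {0, 3t, 3, 3t+3}`. -/
def Omega (t : ℝ) : Set ℝ := {0, 3*t, 3, 3*t+3}

/-- The projection `C_t` of the four corner Cantor set:
the set of sums `∑_{i≥1} d_i 4^{-i}` with all digits `d_i ∈ Ω_t`. -/
noncomputable def cornerC (t : ℝ) : Set ℝ :=
  {x | ∃ d : ℕ → ℝ, (∀ i, d i ∈ Omega t) ∧ x = ∑' i : ℕ, d i / 4^(i+1)}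

/-- `Γ = {(2k-1)·2^{2ℓ-1} : k, ℓ ∈ ℕ_{>0}}`. -/
def Gamma : Set ℕ := {m | ∃ k l : ℕ, 0 < k ∧ 0 < l ∧ m = (2*k-1) * 2^(2*l-1)}

namespace FourCornerAux

/-- digit value attached to a pair of bits -/
def dig (u v : ℕ) (e : Bool × Bool) : ℕ := (cond e.1 u 0) + (cond e.2 v 0)

lemma dig_le (u v : ℕ) (e : Bool × Bool) : dig u v e ≤ u + v := by
  obtain ⟨a, b⟩ := e; cases a <;> cases b <;> simp [dig]

lemma cond_le (b : Bool) (w : ℕ) : (cond b w 0) ≤ w := by cases b <;> simp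

lemma geom_le : ∀ k : ℕ, (∑ i ∈ Finset.range k, (4:ℤ)^i) ≤ 4^k := by
  intro k
  induction k with
  | zero => simp
  | succ k ihk =>
      rw [Finset.sum_range_succ, pow_succ]
      nlinarith [pow_pos (by norm_num : (0:ℤ) < 4) k]

lemma summable_aux (M : ℕ) (g : ℕ → ℕ) (hg : ∀ i, g i ≤ M) :
    Summable (fun i => (g i : ℝ) / 4 ^ (i + 1)) := by
  have hb : Summable (fun i : ℕ => ((M : ℝ)/4) * (1/4 : ℝ) ^ i) :=
    (summable_geometric_of_lt_one (by norm_num) (by norm_num)).mul_left _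
  refine Summable.of_nonneg_of_le (fun i => by positivity) (fun i => ?_) hb
  have h1 : ((M:ℝ)/4) * (1/4)^i = (M:ℝ)/4^(i+1) := by
    rw [div_pow, one_pow, pow_succ]; ring
  rw [h1]
  exact (div_le_div_iff_of_pos_right (by positivity)).mpr (by exact_mod_cast hg i)

/-- the sum attached to a digit stream -/
noncomputable def fX (u v : ℕ) (ε : ℕ → Bool × Bool) : ℝ :=
  ∑' i, (dig u v (ε i) : ℝ) / 4 ^ (i + 1)

/-- the self-similar set with digits `{0,u,v,u+v}` in base 4 -/
def XS (u v : ℕ) : Set ℝ := Set.range (fX u v)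

lemma summable_fX (u v : ℕ) (ε : ℕ → Bool × Bool) :
    Summable (fun i => (dig u v (ε i) : ℝ) / 4 ^ (i + 1)) :=
  summable_aux (u+v) _ (fun i => dig_le u v (ε i))

lemma continuous_fX (u v : ℕ) : Continuous (fX u v) := by
  have hf : ∀ i : ℕ, Continuous fun ε : ℕ → Bool × Bool => (dig u v (ε i) : ℝ) / 4 ^ (i + 1) :=
    fun i => (continuous_of_discreteTopology
      (f := fun e : Bool × Bool => ((dig u v e : ℕ) : ℝ) / 4 ^ (i + 1))).comp (continuous_apply i)
  have hsum : Summable (fun i : ℕ => ((u + v : ℕ) : ℝ)/4^(i+1)) :=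
    summable_aux (u+v) (fun _ => u+v) (fun _ => le_rfl)
  have hb : ∀ (n : ℕ) (ε : ℕ → Bool × Bool),
      ‖(dig u v (ε n) : ℝ) / 4 ^ (n + 1)‖ ≤ ((u + v : ℕ) : ℝ)/4^(n+1) := by
    intro n ε
    rw [Real.norm_eq_abs, abs_of_nonneg (by positivity)]
    exact (div_le_div_iff_of_pos_right (by positivity)).mpr (by exact_mod_cast dig_le u v (ε n))
  exact continuous_tsum hf hsum hb

lemma isClosed_XS (u v : ℕ) : IsClosed (XS u v) :=
  (isCompact_range (continuous_fX u v)).isClosed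

/-- the partial sums hit every residue class mod `4^k` -/
lemma surj_mod (u v : ℕ) (hu : u % 4 = 2) (hv : v % 2 = 1) :
    ∀ (k : ℕ) (N : ℤ), ∃ ε : ℕ → Bool × Bool,
      (4:ℤ)^k ∣ (∑ i ∈ Finset.range k, (dig u v (ε i) : ℤ) * 4 ^ i) - N := by
  intro k
  induction k with
  | zero =>
      intro N
      exact ⟨fun _ => (false, false), by simp⟩
  | succ k ih =>
      intro N
      have h1 : (u : ℤ) % 4 = 2 := by omega
      have h2 : (v : ℤ) % 2 = 1 := by omega
      have hd : (4:ℤ) ∣ ((dig u v (false,false) : ℤ) - N) ∨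
          (4:ℤ) ∣ ((dig u v (true,false) : ℤ) - N) ∨
          (4:ℤ) ∣ ((dig u v (false,true) : ℤ) - N) ∨
          (4:ℤ) ∣ ((dig u v (true,true) : ℤ) - N) := by
        simp only [dig, cond_true, cond_false]
        push_cast
        omega
      have hd' : ∃ e : Bool × Bool, (4:ℤ) ∣ ((dig u v e : ℤ) - N) := by
        rcases hd with h | h | h | h
        exacts [⟨_, h⟩, ⟨_, h⟩, ⟨_, h⟩, ⟨_, h⟩]
      obtain ⟨e0, N1, hN1⟩ := hd'
      obtain ⟨ε, c, hc⟩ := ih (-N1)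
      refine ⟨fun i => Nat.casesOn i e0 ε, ⟨c, ?_⟩⟩
      rw [Finset.sum_range_succ']
      simp only [Nat.rec_zero]
      have : ∀ i, ((dig u v (ε i) : ℤ)) * 4 ^ (i+1) = 4 * ((dig u v (ε i) : ℤ)*4^i) := by
        intro i; ring
      rw [Finset.sum_congr rfl (fun i _ => this i), ← Finset.mul_sum]
      have hsum : (∑ i ∈ Finset.range k, (dig u v (ε i) : ℤ) * 4 ^ i) = 4^k * c - N1 := by
        linarith [hc]
      rw [hsum]
      have : (dig u v e0 : ℤ) = N + 4 * N1 := by linarith [hN1]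
      rw [this]
      ring

/-- every real number has an integer translate inside `XS u v` -/
lemma exists_translate (u v : ℕ) (hu : u % 4 = 2) (hv : v % 2 = 1) (x : ℝ) :
    ∃ n : ℤ, x + n ∈ XS u v := by
  set C : ℤ := (u + v) + ⌈|x|⌉ + 2 with hC
  have hCx : |x| ≤ (C : ℝ) - (u+v) - 2 := by
    have := Int.le_ceil |x|
    rw [hC]; push_cast; linarith
  have key : ∀ k : ℕ, ∃ (y : ℝ) (m : ℤ), y ∈ XS u v ∧ -C ≤ m ∧ m ≤ C ∧
      |y - (x + m)| ≤ (1/4 : ℝ)^k := by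
    intro k
    have h4k : (0:ℝ) < 4^k := by positivity
    obtain ⟨ε, hε⟩ := surj_mod u v hu hv k ⌊(4:ℝ)^k * x⌋
    set N : ℤ := ⌊(4:ℝ)^k * x⌋ with hN
    set S : ℤ := ∑ i ∈ Finset.range k, (dig u v (ε i) : ℤ) * 4 ^ i with hS
    set ρ : ℕ → Bool × Bool := fun j => if j < k then ε (k - 1 - j) else (false, false) with hρ
    have hy : fX u v ρ = (S:ℝ)/4^k := by
      have hz : ∀ j ∉ Finset.range k, (dig u v (ρ j) : ℝ) / 4 ^ (j + 1) = 0 := by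
        intro j hj
        rw [Finset.mem_range] at hj
        have : ρ j = (false, false) := by rw [hρ]; simp [hj]
        rw [this]; simp [dig]
      rw [fX, tsum_eq_sum hz]
      set F : ℕ → ℝ := fun i => (dig u v (ε i) : ℝ) * 4^i / 4^k with hF
      have hterm : ∀ j ∈ Finset.range k, (dig u v (ρ j) : ℝ) / 4 ^ (j + 1)
          = F (k - 1 - j) := by
        intro j hj
        rw [Finset.mem_range] at hj
        have hρj : ρ j = ε (k - 1 - j) := by rw [hρ]; simp [hj]
        rw [hρj, hF]
        simp only []
        rw [div_eq_div_iff (by positivity) (by positivity), mul_assoc, ← pow_add]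
        have : k - 1 - j + (j + 1) = k := by omega
        rw [this]
      rw [Finset.sum_congr rfl hterm, Finset.sum_range_reflect F k, hF, ← Finset.sum_div]
      congr 1
      rw [hS]
      push_cast
      rfl
    have hS0 : 0 ≤ S := by
      rw [hS]
      apply Finset.sum_nonneg
      intro i _
      positivity
    have hgeom : (∑ i ∈ Finset.range k, (4:ℤ)^i) ≤ 4^k := geom_le k
    have hSle : S ≤ (u + v) * 4^k := by
      rw [hS]
      calc (∑ i ∈ Finset.range k, (dig u v (ε i) : ℤ) * 4 ^ i)
          ≤ ∑ i ∈ Finset.range k, ((u:ℤ)+v) * 4 ^ i := by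
            apply Finset.sum_le_sum
            intro i _
            have := dig_le u v (ε i)
            have h4 : (0:ℤ) < 4^i := by positivity
            have : (dig u v (ε i) : ℤ) ≤ (u:ℤ)+v := by exact_mod_cast this
            nlinarith
        _ = ((u:ℤ)+v) * ∑ i ∈ Finset.range k, 4 ^ i := by rw [Finset.mul_sum]
        _ ≤ ((u:ℤ)+v) * 4^k := by
            have : (0:ℤ) ≤ (u:ℤ)+v := by positivity
            nlinarith
    obtain ⟨m, hm⟩ := hε
    -- S - N = 4^k * m
    have hNle : (N : ℝ) ≤ 4^k * x := Int.floor_le _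
    have hNgt : 4^k * x - 1 < (N : ℝ) := by
      have := Int.lt_floor_add_one ((4:ℝ)^k * x)
      linarith
    have hmR : (S : ℝ) - N = 4^k * m := by exact_mod_cast congrArg (Int.cast : ℤ → ℝ) hm
    have hxabs1 : x ≤ |x| := le_abs_self x
    have hxabs2 : -|x| ≤ x := neg_abs_le x
    have h4k1 : (1:ℝ) ≤ 4^k := by
      simpa using pow_le_pow_right₀ (by norm_num : (1:ℝ) ≤ 4) (Nat.zero_le k)
    -- bounds on m
    have hmlow : -C ≤ m := by
      have hr : -(C:ℝ) ≤ (m:ℝ) := by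
        have hSR : (0:ℝ) ≤ (S:ℝ) := by exact_mod_cast hS0
        have : 4^k * (m:ℝ) = (S:ℝ) - N := by linarith
        have h1 : 4^k * (m:ℝ) ≥ -(4^k * x) := by
          rw [this]; linarith
        have h2 : 4^k * (-(C:ℝ)) ≤ 4^k * (m:ℝ) := by
          have : -(C:ℝ) ≤ -|x| := by linarith
          nlinarith
        exact le_of_mul_le_mul_left h2 h4k
      exact_mod_cast hr
    have hmhigh : m ≤ C := by
      have hr : (m:ℝ) ≤ (C:ℝ) := by
        have hSR : (S:ℝ) ≤ ((u:ℝ) + v) * 4^k := by exact_mod_cast hSle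
        have h1 : 4^k * (m:ℝ) ≤ ((u:ℝ)+v) * 4^k - 4^k * x + 1 := by linarith
        have h2 : 4^k * (m:ℝ) ≤ 4^k * (C:ℝ) := by nlinarith
        exact le_of_mul_le_mul_left h2 h4k
      exact_mod_cast hr
    refine ⟨fX u v ρ, m, ⟨ρ, rfl⟩, hmlow, hmhigh, ?_⟩
    rw [hy]
    have : (S:ℝ)/4^k - (x + m) = ((N:ℝ) - 4^k * x)/4^k := by
      field_simp
      linarith
    rw [this, abs_div, abs_of_pos h4k]
    have habs : |(N:ℝ) - 4^k * x| ≤ 1 := by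
      rw [abs_le]; constructor <;> linarith
    have h14 : ((1:ℝ)/4)^k = 1/4^k := by rw [div_pow, one_pow]
    rw [h14]
    gcongr
  choose Y M hY hM1 hM2 hclose using key
  have hfin : ∃ n : ℤ, {k : ℕ | M k = n}.Infinite := by
    by_contra h
    push_neg at h
    have hsub : (Set.univ : Set ℕ) ⊆ ⋃ n ∈ Set.Icc (-C) C, {k : ℕ | M k = n} := by
      intro k _
      exact Set.mem_biUnion ⟨hM1 k, hM2 k⟩ rfl
    have hfin2 : ((Set.Icc (-C) C) : Set ℤ).Finite := Set.finite_Icc _ _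
    have : (Set.univ : Set ℕ).Finite :=
      Set.Finite.subset (hfin2.biUnion (fun n _ => (h n))) hsub
    exact Set.infinite_univ this
  obtain ⟨n, hn⟩ := hfin
  refine ⟨n, ?_⟩
  have hcl := isClosed_XS u v
  rw [← hcl.closure_eq, Metric.mem_closure_iff]
  intro δ hδ
  obtain ⟨K, hK⟩ := exists_pow_lt_of_lt_one hδ (by norm_num : (1/4 : ℝ) < 1)
  obtain ⟨k, hk_mem, hk_gt⟩ := hn.exists_gt K
  refine ⟨Y k, hY k, ?_⟩
  have h1 : |Y k - (x + (M k : ℝ))| ≤ (1/4 : ℝ)^k := hclose k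
  have h2 : M k = n := hk_mem
  rw [h2] at h1
  have h3 : (1/4:ℝ)^k ≤ (1/4:ℝ)^K :=
    pow_le_pow_of_le_one (by norm_num) (by norm_num) hk_gt.le
  calc dist (x + (n:ℝ)) (Y k) = |Y k - (x + (n:ℝ))| := by
        rw [dist_comm, Real.dist_eq]
    _ ≤ (1/4:ℝ)^k := h1
    _ ≤ (1/4:ℝ)^K := h3
    _ < δ := hK

/-- Baire: `XS u v` contains an interval when digits are a complete residue system -/
lemma core (u v : ℕ) (hu : u % 4 = 2) (hv : v % 2 = 1) :
    ∃ A B : ℝ, A < B ∧ Set.Icc A B ⊆ XS u v := by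
  have hcover : ⋃ n : ℤ, ((fun y : ℝ => y + n) ⁻¹' XS u v) = Set.univ := by
    ext x
    simp only [Set.mem_iUnion, Set.mem_preimage, Set.mem_univ, iff_true]
    exact exists_translate u v hu hv x
  have hclosed : ∀ n : ℤ, IsClosed ((fun y : ℝ => y + n) ⁻¹' XS u v) := by
    intro n
    exact (isClosed_XS u v).preimage (by continuity)
  obtain ⟨n, z, hz⟩ := nonempty_interior_of_iUnion_of_closed hclosed hcover
  obtain ⟨δ, hδ, hball⟩ := Metric.mem_nhds_iff.mp (mem_interior_iff_mem_nhds.mp hz)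
  refine ⟨z + n, z + δ/2 + n, by linarith, ?_⟩
  intro w hw
  have hwb : w - n ∈ Metric.ball z δ := by
    rw [Metric.mem_ball, Real.dist_eq]
    rw [Set.mem_Icc] at hw
    rw [abs_lt]
    constructor
    · linarith [hw.1]
    · linarith [hw.2]
  have := hball hwb
  simpa using this

lemma fX_split (u v : ℕ) (ε : ℕ → Bool × Bool) :
    fX u v ε = (∑' i, ((cond (ε i).1 u 0 : ℕ) : ℝ)/4^(i+1))
      + ∑' i, ((cond (ε i).2 v 0 : ℕ) : ℝ)/4^(i+1) := by
  rw [fX, ← Summable.tsum_add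
      (summable_aux u (fun i => cond (ε i).1 u 0) (fun i => cond_le _ _))
      (summable_aux v (fun i => cond (ε i).2 v 0) (fun i => cond_le _ _))]
  refine tsum_congr fun i => ?_
  cases h1 : (ε i).1 <;> cases h2 : (ε i).2 <;>
    · simp only [dig, h1, h2, cond_false, cond_true]
      push_cast
      ring

set_option maxHeartbeats 1000000 in
/-- inserting zeros in the first digit stream: scales the first digit weight -/
lemma shift (u v m : ℕ) : XS u v ⊆ XS (4^m * u) v := by
  rintro x ⟨ε, rfl⟩
  set ε' : ℕ → Bool × Bool :=
    fun i => (if m ≤ i then (ε (i - m)).1 else false, (ε i).2) with hε'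
  refine ⟨ε', ?_⟩
  rw [fX_split, fX_split]
  congr 1
  · -- first parts
    have hsummable : Summable (fun i => ((cond (ε' i).1 (4^m*u) 0 : ℕ) : ℝ)/4^(i+1)) :=
      summable_aux (4^m*u) (fun i => cond (ε' i).1 (4^m*u) 0)
        (fun i => cond_le _ _)
    rw [← Summable.sum_add_tsum_nat_add m hsummable]
    have hzero : (∑ i ∈ Finset.range m, ((cond (ε' i).1 (4^m*u) 0 : ℕ) : ℝ)/4^(i+1)) = 0 := by
      apply Finset.sum_eq_zero
      intro i hi
      rw [Finset.mem_range] at hi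
      have : (ε' i).1 = false := by rw [hε']; simp [Nat.not_le.mpr hi]
      rw [this]
      simp
    rw [hzero, zero_add]
    apply tsum_congr
    intro j
    have h1 : (ε' (j + m)).1 = (ε j).1 := by
      rw [hε']
      simp [Nat.le_add_left]
    rw [h1]
    cases (ε j).1
    · simp
    · simp only [cond_true]
      push_cast
      rw [div_eq_div_iff (by positivity) (by positivity)]
      rw [show j + m + 1 = m + (j+1) by omega, pow_add]
      ring

lemma swapXS (u v : ℕ) : XS u v ⊆ XS v u := by
  rintro x ⟨ε, rfl⟩
  refine ⟨fun i => ((ε i).2, (ε i).1), tsum_congr fun i => ?_⟩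
  have hd : dig v u ((ε i).2, (ε i).1) = dig u v (ε i) := by
    simp [dig, Nat.add_comm]
  rw [hd]

/-- transfer an interval in `XS q p` to `cornerC (p/q)` -/
lemma transfer (p q : ℕ) (hq : 0 < q) {A B : ℝ} (h : Set.Icc A B ⊆ XS q p) :
    Set.Icc (3*A/q) (3*B/q) ⊆ cornerC ((p:ℝ)/q) := by
  intro y hy
  have hq' : (0:ℝ) < q := by exact_mod_cast hq
  rw [Set.mem_Icc] at hy
  have hx : (q * y / 3) ∈ Set.Icc A B := by
    rw [Set.mem_Icc]
    obtain ⟨h1, h2⟩ := hy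
    rw [div_le_iff₀ hq'] at h1
    rw [le_div_iff₀ hq'] at h2
    constructor
    · rw [le_div_iff₀ (by norm_num : (0:ℝ) < 3)]; nlinarith
    · rw [div_le_iff₀ (by norm_num : (0:ℝ) < 3)]; nlinarith
  obtain ⟨ε, hε⟩ := h hx
  refine ⟨fun i => (3/(q:ℝ)) * (dig q p (ε i) : ℝ), fun i => ?_, ?_⟩
  · simp only [Omega, Set.mem_insert_iff, Set.mem_singleton_iff]
    have hqne : (q:ℝ) ≠ 0 := hq'.ne'
    cases h1 : (ε i).1 <;> cases h2 : (ε i).2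
    · left; simp [dig, h1, h2]
    · right; left
      simp only [dig, h1, h2, cond_false, cond_true]
      push_cast
      ring
    · right; right; left
      simp only [dig, h1, h2, cond_false, cond_true]
      push_cast
      field_simp
      ring
    · right; right; right
      simp only [dig, h1, h2, cond_true]
      push_cast
      field_simp
      ring
  · have hpt : ∀ i : ℕ, (3/(q:ℝ)) * (dig q p (ε i) : ℝ) / 4^(i+1)
        = (3/(q:ℝ)) * ((dig q p (ε i) : ℝ) / 4^(i+1)) := fun i => by ring
    rw [tsum_congr hpt, tsum_mul_left]
    rw [show ∑' i, (dig q p (ε i) : ℝ)/4^(i+1) = fX q p ε from rfl, hε]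
    field_simp

end FourCornerAux

open FourCornerAux in
theorem contains_interval_of_no_overlap (p q : ℕ) (hp : 0 < p) (hpq : p < q)
    (hco : Nat.Coprime p q) (hG : p ∈ Gamma ∨ q ∈ Gamma) :
    ∃ a b : ℝ, a < b ∧ Set.Icc a b ⊆ cornerC ((p : ℝ) / q) := by
  have hq0 : 0 < q := hp.trans hpq
  have key : ∀ m : ℕ, (∃ k l : ℕ, 0 < k ∧ 0 < l ∧ m = (2*k-1) * 2^(2*l-1)) →
      ∃ u e : ℕ, u % 4 = 2 ∧ m = 4^e * u := by
    rintro m ⟨k, l, hk, hl, hm⟩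
    refine ⟨2*(2*k-1), l-1, by omega, ?_⟩
    rw [hm, show 2*l-1 = 2*(l-1)+1 by omega, pow_succ, pow_mul]
    ring_nf
  rcases hG with hΓ | hΓ
  · -- p ∈ Γ, q odd
    obtain ⟨u, e, hu, hpu⟩ := key p hΓ
    have hq2 : q % 2 = 1 := by
      obtain ⟨w, hw⟩ : 2 ∣ u := by omega
      have h2p : 2 ∣ p := ⟨4^e * w, by rw [hpu, hw]; ring⟩
      rcases Nat.even_or_odd q with he | ho
      · exfalso
        have h2q : 2 ∣ q := he.two_dvd
        have := Nat.dvd_gcd h2p h2q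
        rw [hco] at this
        omega
      · obtain ⟨r, hr⟩ := ho
        omega
    obtain ⟨A, B, hAB, hsub⟩ := core u q hu hq2
    have h1 : Set.Icc A B ⊆ XS q p := by
      refine hsub.trans ((shift u q e).trans ?_)
      rw [← hpu]
      exact swapXS p q
    have hq' : (0:ℝ) < q := by exact_mod_cast hq0
    exact ⟨3*A/q, 3*B/q, (div_lt_div_iff_of_pos_right hq').mpr (by linarith), transfer p q hq0 h1⟩
  · -- q ∈ Γ, p odd
    obtain ⟨u, e, hu, hqu⟩ := key q hΓ
    have hp2 : p % 2 = 1 := by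
      obtain ⟨w, hw⟩ : 2 ∣ u := by omega
      have h2q : 2 ∣ q := ⟨4^e * w, by rw [hqu, hw]; ring⟩
      rcases Nat.even_or_odd p with he | ho
      · exfalso
        have h2p : 2 ∣ p := he.two_dvd
        have := Nat.dvd_gcd h2p h2q
        rw [hco] at this
        omega
      · obtain ⟨r, hr⟩ := ho
        omega
    obtain ⟨A, B, hAB, hsub⟩ := core u p hu hp2
    have h1 : Set.Icc A B ⊆ XS q p := by
      refine hsub.trans ?_
      rw [hqu]
      exact shift u p e
    have hq' : (0:ℝ) < q := by exact_mod_cast hq0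
    exact ⟨3*A/q, 3*B/q, (div_lt_div_iff_of_pos_right hq').mpr (by linarith), transfer p q hq0 h1⟩
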